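/- (Decomposition of SU(3).) For every g in SU(3) there exist U₁, U₂ ∈ SU(2), μ ∈ ℂ with |μ| = 1, and α ∈ ℝ, such that g = diag(1, U₁) · M(μ, α) · diag(1, U₂), where diag(1, Uᵢ) is the 3×3 block-diagonal matrix with (0,0) entry 1 and lower-right 2×2 block Uᵢ, and M(μ, α) is the 3×3 matrix with rows (μ²cos α, −sin α, 0), (sin α, μ⁻²cos α, 0), (0, 0, 1). -/

import Mathlib

open Matrix

/-- The block-diagonal `3 × 3` matrix `diag(1, U)` with `U` a `2 × 2` block. -/
def blk3 (U : Matrix (Fin 2) (Fin 2) ℂ) : Matrix (Fin 3) (Fin 3) ℂ :=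
  Matrix.of (Fin.cons (Fin.cons 1 0) (fun i => Fin.cons 0 (U i)))

/-- The middle factor `M(μ, α)` with rows `(μ²cos α, −sin α, 0)`, `(sin α, μ⁻²cos α, 0)`,
`(0, 0, 1)`. -/
noncomputable def Mmat (μ : ℂ) (α : ℝ) : Matrix (Fin 3) (Fin 3) ℂ :=
  !![μ ^ 2 * (Real.cos α : ℂ), (-Real.sin α : ℂ), 0;
     (Real.sin α : ℂ), (μ ^ 2)⁻¹ * (Real.cos α : ℂ), 0;
     0, 0, 1]

lemma blk3_eq (U : Matrix (Fin 2) (Fin 2) ℂ) :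
    blk3 U = !![1,0,0; 0, U 0 0, U 0 1; 0, U 1 0, U 1 1] := by
  ext i j; fin_cases i <;> fin_cases j <;> rfl
lemma blk3_mul (U V : Matrix (Fin 2) (Fin 2) ℂ) : blk3 U * blk3 V = blk3 (U * V) := by
  rw [blk3_eq, blk3_eq, blk3_eq]
  simp [Matrix.mul_fin_three, Matrix.mul_apply, Fin.sum_univ_two]
lemma blk3_one : blk3 1 = 1 := by
  rw [blk3_eq]; simp [Matrix.one_fin_three]
lemma blk3_star (U : Matrix (Fin 2) (Fin 2) ℂ) : star (blk3 U) = blk3 (star U) := by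
  rw [blk3_eq, blk3_eq]
  ext i j; fin_cases i <;> fin_cases j <;>
    simp [Matrix.conjTranspose_apply, Matrix.vecHead, Matrix.vecTail]
lemma det_blk3 (U : Matrix (Fin 2) (Fin 2) ℂ) : (blk3 U).det = U.det := by
  rw [blk3_eq, Matrix.det_fin_three, Matrix.det_fin_two]
  simp
lemma blk3_injective : Function.Injective blk3 := by
  intro X Y h
  ext i j
  fin_cases i <;> fin_cases j
  · exact congrFun (congrFun h 1) 1
  · exact congrFun (congrFun h 1) 2
  · exact congrFun (congrFun h 2) 1
  · exact congrFun (congrFun h 2) 2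

/-- Decomposition of `SU(3)`: every `g ∈ SU(3)` can be written as
`g = diag(1, U₁) · M(μ, α) · diag(1, U₂)` with `U₁, U₂ ∈ SU(2)`, `|μ| = 1`, `α ∈ ℝ`. -/
theorem decomposition_SU3 (g : Matrix (Fin 3) (Fin 3) ℂ)
    (hg : g ∈ Matrix.specialUnitaryGroup (Fin 3) ℂ) :
    ∃ (U₁ U₂ : Matrix (Fin 2) (Fin 2) ℂ) (μ : ℂ) (α : ℝ),
      U₁ ∈ Matrix.specialUnitaryGroup (Fin 2) ℂ ∧
      U₂ ∈ Matrix.specialUnitaryGroup (Fin 2) ℂ ∧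
      ‖μ‖ = 1 ∧
      g = blk3 U₁ * Mmat μ α * blk3 U₂ := by
  rw [Matrix.mem_specialUnitaryGroup_iff, Matrix.mem_unitaryGroup_iff'] at hg
  obtain ⟨hu, hd⟩ := hg
  set a := g 0 0 with ha'
  set b₁ := g 1 0 with hb₁'
  set b₂ := g 2 0 with hb₂'
  -- column norm
  have hcol : Complex.normSq a + Complex.normSq b₁ + Complex.normSq b₂ = 1 := by
    have e := congrFun (congrFun hu 0) 0
    simp only [Matrix.mul_apply, Fin.sum_univ_three, Matrix.star_apply,
      Matrix.one_apply_eq, Complex.star_def] at e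
    have : ((Complex.normSq a + Complex.normSq b₁ + Complex.normSq b₂ : ℝ) : ℂ) = 1 := by
      push_cast
      rw [← Complex.normSq_eq_conj_mul_self, ← Complex.normSq_eq_conj_mul_self,
        ← Complex.normSq_eq_conj_mul_self] at e
      exact_mod_cast e
    exact_mod_cast this
  set t := Complex.normSq b₁ + Complex.normSq b₂ with ht'
  have ht0 : 0 ≤ t := by
    have := Complex.normSq_nonneg b₁; have := Complex.normSq_nonneg b₂; linarith
  have ht1 : t ≤ 1 := by have := Complex.normSq_nonneg a; linarith
  set r := Real.sqrt t with hr'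
  have hr0 : 0 ≤ r := Real.sqrt_nonneg t
  have hr2 : r ^ 2 = t := Real.sq_sqrt ht0
  have hr1 : r ≤ 1 := by
    rw [hr', show (1:ℝ) = Real.sqrt 1 by simp]
    exact Real.sqrt_le_sqrt ht1
  set α := Real.arcsin r with hα'
  have hs : Real.sin α = r := Real.sin_arcsin (by linarith) hr1
  have hca : Real.cos α = ‖a‖ := by
    rw [hα', Real.cos_arcsin, hr2, Complex.norm_def]
    congr 1
    linarith
  -- the phase
  set w : ℂ := if a = 0 then 1 else a / (‖a‖ : ℂ) with hw'
  have hwabs : ‖w‖ = 1 := by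
    rw [hw']
    split_ifs with h
    · simp
    · rw [norm_div, Complex.norm_real, Real.norm_eq_abs, abs_of_nonneg (norm_nonneg a)]
      field_simp [norm_ne_zero_iff.mpr h]
  have hwa : w * (‖a‖ : ℂ) = a := by
    rw [hw']
    split_ifs with h
    · simp [h]
    · rw [div_mul_cancel₀]
      exact_mod_cast norm_ne_zero_iff.mpr h
  set μ : ℂ := Complex.exp ((w.arg / 2 : ℝ) * Complex.I) with hμ'
  have hμabs : ‖μ‖ = 1 := Complex.norm_exp_ofReal_mul_I _
  have hμ2 : μ ^ 2 = w := by
    rw [hμ', sq, ← Complex.exp_add]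
    have h2 : ((w.arg / 2 : ℝ) : ℂ) * Complex.I + ((w.arg / 2 : ℝ) : ℂ) * Complex.I
        = (w.arg : ℝ) * Complex.I := by push_cast; ring
    rw [h2]
    have := Complex.norm_mul_exp_arg_mul_I w
    rwa [hwabs, Complex.ofReal_one, one_mul] at this
  have hwne : w ≠ 0 := by
    intro h; rw [h] at hwabs; simp at hwabs
  have hq : starRingEnd ℂ w * w = 1 := by
    rw [← Complex.normSq_eq_conj_mul_self, Complex.normSq_eq_norm_sq, hwabs]
    norm_num
  have hbb : starRingEnd ℂ b₁ * b₁ + starRingEnd ℂ b₂ * b₂ = (r : ℂ) ^ 2 := by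
    rw [← Complex.normSq_eq_conj_mul_self, ← Complex.normSq_eq_conj_mul_self]
    norm_cast
    exact (hr2.trans ht').symm
  set V₁ : Matrix (Fin 2) (Fin 2) ℂ :=
    if r = 0 then 1 else ((r:ℂ)⁻¹) • !![starRingEnd ℂ b₁, starRingEnd ℂ b₂; -b₂, b₁] with hV₁'
  have hb0 : r = 0 → b₁ = 0 ∧ b₂ = 0 := by
    intro h
    have : t = 0 := by rw [← hr2, h]; ring
    have h1 := Complex.normSq_nonneg b₁
    have h2 := Complex.normSq_nonneg b₂
    constructor
    · exact Complex.normSq_eq_zero.mp (by rw [ht'] at this; linarith)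
    · exact Complex.normSq_eq_zero.mp (by rw [ht'] at this; linarith)
  have hV1u : star V₁ * V₁ = 1 := by
    rw [hV₁']; split_ifs with h
    · simp
    · have hrc : (r : ℂ) ≠ 0 := by exact_mod_cast h
      have hrr : ((r:ℂ))⁻¹ ^ 2 * (r:ℂ) ^ 2 = 1 := by field_simp
      ext i j
      fin_cases i <;> fin_cases j
      · simp [Matrix.mul_apply, Fin.sum_univ_two, Matrix.conjTranspose_apply, Matrix.one_apply,
          Complex.conj_ofReal, _root_.map_mul, map_inv₀]
        linear_combination ((r:ℂ))⁻¹ ^ 2 * hbb + hrr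
      · simp [Matrix.mul_apply, Fin.sum_univ_two, Matrix.conjTranspose_apply, Matrix.one_apply,
          Complex.conj_ofReal, _root_.map_mul, map_inv₀]
        ring
      · simp [Matrix.mul_apply, Fin.sum_univ_two, Matrix.conjTranspose_apply, Matrix.one_apply,
          Complex.conj_ofReal, _root_.map_mul, map_inv₀]
        ring
      · simp [Matrix.mul_apply, Fin.sum_univ_two, Matrix.conjTranspose_apply, Matrix.one_apply,
          Complex.conj_ofReal, _root_.map_mul, map_inv₀]
        linear_combination ((r:ℂ))⁻¹ ^ 2 * hbb + hrr
  have hV1d : V₁.det = 1 := by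
    rw [hV₁']; split_ifs with h
    · simp
    · have hrc : (r : ℂ) ≠ 0 := by exact_mod_cast h
      have hrr : ((r:ℂ))⁻¹ ^ 2 * (r:ℂ) ^ 2 = 1 := by field_simp
      simp [Matrix.det_fin_two, Matrix.smul_apply]
      linear_combination ((r:ℂ))⁻¹ ^ 2 * hbb + hrr
  have hVb1 : V₁ 0 0 * b₁ + V₁ 0 1 * b₂ = (r:ℂ) := by
    rw [hV₁']; split_ifs with h
    · obtain ⟨e1, e2⟩ := hb0 h
      simp [Matrix.one_apply, e1, e2, h]
    · have hrc : (r : ℂ) ≠ 0 := by exact_mod_cast h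
      have hr3 : ((r:ℂ))⁻¹ * (r:ℂ) ^ 2 = (r:ℂ) := by field_simp
      simp [Matrix.smul_apply]
      linear_combination ((r:ℂ))⁻¹ * hbb + hr3
  have hVb2 : V₁ 1 0 * b₁ + V₁ 1 1 * b₂ = 0 := by
    rw [hV₁']; split_ifs with h
    · obtain ⟨e1, e2⟩ := hb0 h
      simp [Matrix.one_apply, e1, e2]
    · simp [Matrix.smul_apply]
      ring
  set h3 := blk3 V₁ * g with hh3'
  have h00 : h3 0 0 = a := by
    rw [hh3', blk3_eq]
    simp [Matrix.mul_apply, Fin.sum_univ_three]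
    rfl
  have h10 : h3 1 0 = (r:ℂ) := by
    rw [hh3', blk3_eq]
    simp [Matrix.mul_apply, Fin.sum_univ_three]
    linear_combination hVb1
  have h20 : h3 2 0 = 0 := by
    rw [hh3', blk3_eq]
    simp [Matrix.mul_apply, Fin.sum_univ_three]
    linear_combination hVb2
  have hbV : star (blk3 V₁) * blk3 V₁ = 1 := by
    rw [blk3_star, blk3_mul, hV1u, blk3_one]
  have hh3u : star h3 * h3 = 1 := by
    rw [hh3', Matrix.star_mul, mul_assoc, ← mul_assoc (star (blk3 V₁)), hbV, one_mul, hu]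
  have hh3d : h3.det = 1 := by
    rw [hh3', Matrix.det_mul, det_blk3, hV1d, hd, one_mul]
  have hcs : (Real.cos α : ℂ) ^ 2 + (Real.sin α : ℂ) ^ 2 = 1 := by
    exact_mod_cast congrArg (fun x : ℝ => (x : ℂ)) (Real.cos_sq_add_sin_sq α)
  have hwinv : w⁻¹ = starRingEnd ℂ w := inv_eq_of_mul_eq_one_left hq
  obtain ⟨c, hc⟩ : ∃ c : ℂ, (Real.cos α : ℂ) = c := ⟨_, rfl⟩
  obtain ⟨sn, hsn⟩ : ∃ sn : ℂ, (Real.sin α : ℂ) = sn := ⟨_, rfl⟩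
  have hcc : starRingEnd ℂ c = c := by rw [← hc]; exact Complex.conj_ofReal _
  have hss : starRingEnd ℂ sn = sn := by rw [← hsn]; exact Complex.conj_ofReal _
  have hM : Mmat μ α = !![w * c, -sn, 0; sn, starRingEnd ℂ w * c, 0; 0, 0, 1] := by
    rw [Mmat, hμ2, hwinv, hc, hsn]
  have ha : a = w * (Real.cos α : ℂ) := by
    rw [hca]; exact hwa.symm
  have hcs2 : c ^ 2 + sn ^ 2 = 1 := by rw [← hc, ← hsn]; exact hcs
  have hMu : star (Mmat μ α) * Mmat μ α = 1 := by
    rw [hM]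
    ext i j
    fin_cases i <;> fin_cases j <;>
      (simp [Matrix.mul_apply, Fin.sum_univ_three, Matrix.conjTranspose_apply, Matrix.one_apply,
        hcc, hss, _root_.map_mul, Complex.conj_conj, map_neg]) <;>
      (first
        | ring1
        | (linear_combination c ^ 2 * hq + hcs2))
  have hMd : (Mmat μ α).det = 1 := by
    rw [hM, Matrix.det_fin_three]
    simp
    linear_combination c ^ 2 * hq + hcs2
  set k := star (Mmat μ α) * h3 with hk'
  have hcolM : ∀ i, h3 i 0 = Mmat μ α i 0 := by
    intro i
    fin_cases i
    · show h3 0 0 = Mmat μ α 0 0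
      rw [h00, hM]; simp; rw [ha, hc]
    · show h3 1 0 = Mmat μ α 1 0
      rw [h10, hM]; simp; rw [← hsn]; exact_mod_cast congrArg (fun x : ℝ => (x:ℂ)) hs.symm
    · show h3 2 0 = Mmat μ α 2 0
      rw [h20, hM]; simp
  have hk0 : ∀ i, k i 0 = (1 : Matrix (Fin 3) (Fin 3) ℂ) i 0 := by
    intro i
    have e : k i 0 = (star (Mmat μ α) * Mmat μ α) i 0 := by
      rw [hk']; simp only [Matrix.mul_apply]
      exact Finset.sum_congr rfl fun j _ => by rw [hcolM j]
    rw [e, hMu]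
  have hku : star k * k = 1 := by
    rw [hk', Matrix.star_mul, star_star, mul_assoc, ← mul_assoc (Mmat μ α),
      mul_eq_one_comm.mp hMu, one_mul, hh3u]
  have hkk : k * star k = 1 := mul_eq_one_comm.mp hku
  have k00 : k 0 0 = 1 := by simpa using hk0 0
  have k10 : k 1 0 = 0 := by simpa [Matrix.one_apply] using hk0 1
  have k20 : k 2 0 = 0 := by simpa [Matrix.one_apply] using hk0 2
  have krow : k 0 1 = 0 ∧ k 0 2 = 0 := by
    have e := congrFun (congrFun hkk 0) 0
    simp only [Matrix.mul_apply, Fin.sum_univ_three, Matrix.star_apply, Complex.star_def,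
      Matrix.one_apply_eq, k00, Complex.mul_conj, _root_.map_one, Complex.normSq_one, Complex.ofReal_one, mul_one] at e
    have e' : Complex.normSq (k 0 1) + Complex.normSq (k 0 2) = 0 := by
      have e2 : ((Complex.normSq (k 0 1) + Complex.normSq (k 0 2) : ℝ) : ℂ) = 0 := by
        push_cast
        linear_combination e
      exact_mod_cast e2
    have n1 := Complex.normSq_nonneg (k 0 1)
    have n2 := Complex.normSq_nonneg (k 0 2)
    exact ⟨Complex.normSq_eq_zero.mp (by linarith), Complex.normSq_eq_zero.mp (by linarith)⟩
  set W : Matrix (Fin 2) (Fin 2) ℂ := !![k 1 1, k 1 2; k 2 1, k 2 2] with hW'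
  have hkW : k = blk3 W := by
    rw [blk3_eq]
    ext i j
    fin_cases i <;> fin_cases j <;>
      simp [hW', k00, k10, k20, krow.1, krow.2, Matrix.vecHead, Matrix.vecTail]
  have hWu : star W * W = 1 := by
    apply blk3_injective
    rw [← blk3_mul, ← blk3_star, ← hkW, blk3_one, hku]
  have hWd : W.det = 1 := by
    have hkd : k.det = 1 := by
      rw [hk', Matrix.det_mul, show star (Mmat μ α) = (Mmat μ α)ᴴ from rfl,
        Matrix.det_conjTranspose, hMd, hh3d]
      simp
    rw [hkW, det_blk3] at hkd
    exact hkd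
  refine ⟨star V₁, W, μ, α, ?_, ?_, hμabs, ?_⟩
  · rw [Matrix.mem_specialUnitaryGroup_iff, Matrix.mem_unitaryGroup_iff']
    constructor
    · rw [star_star]; exact mul_eq_one_comm.mp hV1u
    · rw [show star V₁ = V₁ᴴ from rfl, Matrix.det_conjTranspose, hV1d]
      simp
  · rw [Matrix.mem_specialUnitaryGroup_iff, Matrix.mem_unitaryGroup_iff']
    exact ⟨hWu, hWd⟩
  · rw [← hkW, hk', mul_assoc (blk3 (star V₁)), ← mul_assoc (Mmat μ α),
      mul_eq_one_comm.mp hMu, one_mul, hh3', ← mul_assoc, blk3_mul, hV1u, blk3_one,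
      one_mul]
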